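/- Let n ≥ 4 and let M be an n×n symmetric positive definite matrix with integer entries whose entries have greatest common divisor 1, with associated quadratic form Q(v) = vᵀMv. Let A_{a,m} be an admissible arithmetic progression such that every element of A_{a,m} is represented by Q over the p-adic integers ℤ_p for every prime p. Then some element of A_{a,m} is represented by Q over ℤ, i.e., there exist λ ∈ A_{a,m} and v ∈ ℤ^n with vᵀMv = λ. -/

import Mathlib

open Matrix

/-- The arithmetic progression `A_{a,m} = {a + m·x : x ∈ ℕ ∪ {0}}`. -/
def AP (a m : ℕ) : Set ℕ := {n | ∃ x : ℕ, n = a + m * x}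

/-- `A_{a,m}` (with `0 < a < m`) is admissible if `ord_p a < ord_p m`
for every prime `p` dividing `m`. -/
def Admissible (a m : ℕ) : Prop :=
  0 < a ∧ a < m ∧ ∀ p : ℕ, p.Prime → p ∣ m → padicValNat p a < padicValNat p m

/-- Applying a ring hom to a quadratic-form value. -/
lemma cast_quadform {R S : Type*} [CommRing R] [CommRing S] (f : R →+* S) {n : ℕ}
    (M : Matrix (Fin n) (Fin n) R) (v : Fin n → R) :
    f (v ⬝ᵥ M.mulVec v) = (f ∘ v) ⬝ᵥ (M.map f).mulVec (f ∘ v) := by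
  rw [RingHom.map_dotProduct]
  congr 1
  funext i
  exact RingHom.map_mulVec f M v i

/-- Product of the prime-power parts of `m` equals `m`, over the attached type. -/
lemma prod_primePow_eq (m : ℕ) (hm : m ≠ 0) :
    ∏ p : m.primeFactors, (p : ℕ) ^ m.factorization p = m := by
  have h1 : ∏ p : m.primeFactors, (p : ℕ) ^ m.factorization p
      = ∏ p ∈ m.primeFactors, p ^ m.factorization p :=
    Finset.prod_coe_sort m.primeFactors (fun p => p ^ m.factorization p)
  have h2 := Nat.factorization_prod_pow_eq_self hm
  rw [Finsupp.prod, Nat.support_factorization] at h2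
  rw [h1, h2]

lemma pairwise_coprime_primePow (m : ℕ) :
    Pairwise (Function.onFun Nat.Coprime fun p : m.primeFactors => (p : ℕ) ^ m.factorization p) := by
  intro p q hpq
  have hp := Nat.prime_of_mem_primeFactors p.2
  have hq := Nat.prime_of_mem_primeFactors q.2
  have hne : (p : ℕ) ≠ q := fun h => hpq (Subtype.ext h)
  exact Nat.Coprime.pow _ _ ((Nat.coprime_primes hp hq).mpr hne)

/-- CRT surjectivity: given residues mod each maximal prime power of `m`,
there is an integer with those residues. -/
lemma crt_exists (m : ℕ) (hm : m ≠ 0)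
    (r : ∀ p : m.primeFactors, ZMod ((p : ℕ) ^ m.factorization p)) :
    ∃ z : ℤ, ∀ p : m.primeFactors,
      ((z : ℤ) : ZMod ((p : ℕ) ^ m.factorization p)) = r p := by
  set af : m.primeFactors → ℕ := fun p => (p : ℕ) ^ m.factorization p with haf
  have hprod : ∏ i, af i = m := prod_primePow_eq m hm
  haveI : NeZero (∏ i, af i) := ⟨by rw [hprod]; exact hm⟩
  let E := ZMod.prodEquivPi af (pairwise_coprime_primePow m)
  refine ⟨((E.symm r).val : ℤ), fun p => ?_⟩
  let f : ZMod (∏ i, af i) →+* ZMod (af p) :=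
    (Pi.evalRingHom (fun i => ZMod (af i)) p).comp (E : ZMod (∏ i, af i) →+* _)
  have h1 : f (E.symm r) = r p := by
    show E (E.symm r) p = r p
    rw [E.apply_symm_apply]
  have h2 : (((E.symm r).val : ℕ) : ZMod (∏ i, af i)) = E.symm r :=
    ZMod.natCast_rightInverse _
  calc (((E.symm r).val : ℤ) : ZMod (af p))
      = (((E.symm r).val : ℕ) : ZMod (af p)) := by push_cast; ring
    _ = f (((E.symm r).val : ℕ) : ZMod (∏ i, af i)) := (map_natCast f _).symm
    _ = r p := by rw [h2, h1]

theorem locally_represented_AP_meets_represented_set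
    (n : ℕ) (hn : 4 ≤ n) (M : Matrix (Fin n) (Fin n) ℤ)
    (hsym : M.IsSymm)
    (hpos : ∀ v : Fin n → ℤ, v ≠ 0 → 0 < v ⬝ᵥ M.mulVec v)
    (hgcd : Finset.univ.gcd (fun ij : Fin n × Fin n => M ij.1 ij.2) = 1)
    (a m : ℕ) (hadm : Admissible a m)
    (hloc : ∀ N ∈ AP a m, ∀ (p : ℕ) (_ : Fact p.Prime),
      ∃ v : Fin n → ℤ_[p],
        v ⬝ᵥ (M.map (Int.cast : ℤ → ℤ_[p])).mulVec v = (N : ℤ_[p])) :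
    ∃ N ∈ AP a m, ∃ v : Fin n → ℤ, v ⬝ᵥ M.mulVec v = (N : ℤ) := by
  obtain ⟨ha, ham, -⟩ := hadm
  have hm0 : m ≠ 0 := by omega
  have haAP : a ∈ AP a m := ⟨0, by ring⟩
  -- Step 1: for every p ∣ m, a solution modulo p ^ v_p(m).
  have hsol : ∀ p : m.primeFactors, ∃ w : Fin n → ZMod ((p : ℕ) ^ m.factorization p),
      w ⬝ᵥ (M.map (Int.cast : ℤ → ZMod ((p : ℕ) ^ m.factorization p))).mulVec w
        = (a : ZMod ((p : ℕ) ^ m.factorization p)) := by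
    intro p
    have hp : Nat.Prime (p : ℕ) := Nat.prime_of_mem_primeFactors p.2
    haveI : Fact (Nat.Prime (p : ℕ)) := ⟨hp⟩
    obtain ⟨v, hv⟩ := hloc a haAP p ‹_›
    set g := (PadicInt.toZModPow (m.factorization p) : ℤ_[(p : ℕ)] →+* ZMod ((p : ℕ) ^ m.factorization p))
    refine ⟨g ∘ v, ?_⟩
    have := congrArg g hv
    rw [cast_quadform g, Matrix.map_map] at this
    have hmap : M.map ((g : ℤ_[(p : ℕ)] → ZMod ((p : ℕ) ^ m.factorization p)) ∘ (Int.cast : ℤ → ℤ_[(p : ℕ)]))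
        = M.map (Int.cast : ℤ → ZMod ((p : ℕ) ^ m.factorization p)) := by
      apply Matrix.ext; intro i j
      simp [Matrix.map_apply, Function.comp, map_intCast]
    rw [hmap] at this
    rw [this, map_natCast]
  choose r hr using hsol
  -- Step 2: CRT-glue the coordinates into an integer vector w.
  have hcrt : ∀ i : Fin n, ∃ z : ℤ, ∀ p : m.primeFactors,
      ((z : ℤ) : ZMod ((p : ℕ) ^ m.factorization p)) = r p i :=
    fun i => crt_exists m hm0 (fun p => r p i)
  choose w hw using hcrt
  set c : ℤ := w ⬝ᵥ M.mulVec w with hc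
  -- Step 3: each prime power divides c - a.
  have hdvd : ∀ p : m.primeFactors, ((p : ℕ) ^ m.factorization p : ℤ) ∣ c - (a : ℤ) := by
    intro p
    have hcast : ((c : ℤ) : ZMod ((p : ℕ) ^ m.factorization p)) = (a : ZMod ((p : ℕ) ^ m.factorization p)) := by
      have h1 : ((c : ℤ) : ZMod ((p : ℕ) ^ m.factorization p))
          = (Int.castRingHom (ZMod ((p : ℕ) ^ m.factorization p))) (w ⬝ᵥ M.mulVec w) := rfl
      rw [h1, cast_quadform]
      have hwp : (Int.castRingHom (ZMod ((p : ℕ) ^ m.factorization p))) ∘ w = r p := by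
        funext i; exact hw i p
      have hMm : M.map (Int.castRingHom (ZMod ((p : ℕ) ^ m.factorization p)))
          = M.map (Int.cast : ℤ → ZMod ((p : ℕ) ^ m.factorization p)) := rfl
      rw [hwp, hMm, hr p]
    have h0 : ((c - (a : ℤ) : ℤ) : ZMod ((p : ℕ) ^ m.factorization p)) = 0 := by
      rw [Int.cast_sub, sub_eq_zero, hcast, Int.cast_natCast]
    have hd := (ZMod.intCast_zmod_eq_zero_iff_dvd (c - (a : ℤ)) ((p : ℕ) ^ m.factorization p)).mp h0
    exact_mod_cast hd
  -- Step 4: hence m ∣ c - a.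
  have hmc : (m : ℤ) ∣ c - (a : ℤ) := by
    have hprodZ : (∏ p : m.primeFactors, ((p : ℕ) ^ m.factorization p : ℤ)) = (m : ℤ) := by
      exact_mod_cast congrArg (Nat.cast : ℕ → ℤ) (prod_primePow_eq m hm0)
    rw [← hprodZ]
    apply Fintype.prod_dvd_of_coprime
    · intro i j hij
      have hp := Nat.prime_of_mem_primeFactors i.2
      have hq := Nat.prime_of_mem_primeFactors j.2
      have hne : (i : ℕ) ≠ j := fun h => hij (Subtype.ext h)
      have h1 : IsCoprime ((i : ℕ) : ℤ) ((j : ℕ) : ℤ) :=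
        Nat.isCoprime_iff_coprime.mpr ((Nat.coprime_primes hp hq).mpr hne)
      exact h1.pow
    · exact hdvd
  -- Step 5: c > 0.
  have hcpos : 0 < c := by
    rcases eq_or_ne w 0 with h0 | h0
    · exfalso
      have hc0 : c = 0 := by simp [hc, h0]
      rw [hc0, zero_sub] at hmc
      have hma : (m : ℤ) ∣ (a : ℤ) := (dvd_neg).mp hmc
      have hna : m ∣ a := Int.ofNat_dvd.mp hma
      have := Nat.le_of_dvd ha hna
      omega
    · exact hpos w h0
  -- Step 6: assemble.
  obtain ⟨t, ht⟩ := hmc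
  have ht0 : 0 ≤ t := by
    by_contra hneg
    push_neg at hneg
    have h1 : (m : ℤ) * t ≤ (m : ℤ) * (-1) :=
      mul_le_mul_of_nonneg_left (by omega) (by positivity)
    have : c - (a : ℤ) ≤ -(m : ℤ) := by rw [ht]; linarith
    have hma : (a : ℤ) < (m : ℤ) := by exact_mod_cast ham
    linarith
  refine ⟨a + m * t.toNat, ⟨t.toNat, rfl⟩, w, ?_⟩
  have : (t.toNat : ℤ) = t := Int.toNat_of_nonneg ht0
  push_cast
  rw [this]
  linarith [ht]
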